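/- Let a₁ be a bounded sesquilinear form on V × W satisfying the inf-sup condition with constant c > 0 and nondegenerate in the second component, and let d be a bounded sesquilinear form on H × W. Assume the embedding j : V → H is a compact operator and that the following injectivity condition holds: every u ∈ V with a₁(u,w) + d(ju,w) = 0 for all w ∈ W satisfies u = 0. Then for every φ ∈ W* there exists exactly one u ∈ V with a₁(u,w) + d(ju,w) = φ(w) for all w ∈ W. -/

import Mathlib

open Metric Filter



-- Riesz-type selection inside a submodule
lemma aux_riesz_sel {𝕂 E : Type*} [RCLike 𝕂] [NormedAddCommGroup E] [NormedSpace 𝕂 E]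
    {F G : Submodule 𝕂 E} (hFG : F ≤ G) (hF : IsClosed (F : Set E))
    {z : E} (hzG : z ∈ G) (hzF : z ∉ F) :
    ∃ x ∈ G, ‖x‖ = 1 ∧ ∀ y ∈ F, (1:ℝ)/2 ≤ ‖x - y‖ := by
  have hne : (F : Set E).Nonempty := ⟨0, F.zero_mem⟩
  have hρ : 0 < infDist z (F : Set E) := (hF.notMem_iff_infDist_pos hne).1 hzF
  obtain ⟨y, hyF, hdy⟩ := (infDist_lt_iff hne).1
    (show infDist z (F : Set E) < 2 * infDist z (F : Set E) by linarith)
  set v := z - y with hv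
  have hvnorm : ‖v‖ = dist z y := by rw [dist_eq_norm]
  have hvpos : 0 < ‖v‖ := by
    rw [hvnorm, dist_pos]; rintro rfl; exact hzF hyF
  refine ⟨((‖v‖ : 𝕂))⁻¹ • v, ?_, ?_, ?_⟩
  · exact Submodule.smul_mem _ _ (G.sub_mem hzG (hFG hyF))
  · rw [norm_smul, norm_inv, RCLike.norm_ofReal, abs_of_pos hvpos, inv_mul_cancel₀ hvpos.ne']
  · intro w hwF
    have hcast : ((‖v‖ : 𝕂)) ≠ 0 := by simpa using hvpos.ne'
    have key : ((‖v‖ : 𝕂))⁻¹ • v - w = ((‖v‖ : 𝕂))⁻¹ • (v - (‖v‖ : 𝕂) • w) := by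
      have h3 : ((‖v‖:𝕂))⁻¹ • (((‖v‖:𝕂)) • w) = w := inv_smul_smul₀ hcast w
      conv_rhs => rw [smul_sub, h3]
    have hmem : y + (‖v‖ : 𝕂) • w ∈ (F : Set E) := F.add_mem hyF (F.smul_mem _ hwF)
    have hbd : infDist z (F : Set E) ≤ ‖v - (‖v‖ : 𝕂) • w‖ := by
      have h2 := infDist_le_dist_of_mem (x := z) hmem
      rw [dist_eq_norm] at h2
      rw [show v - (‖v‖ : 𝕂) • w = z - (y + (‖v‖ : 𝕂) • w) by rw [hv]; abel]
      exact h2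
    have key2 : (((‖v‖ : 𝕂))⁻¹ • v) - w = ((‖v‖ : 𝕂))⁻¹ • (v - (‖v‖ : 𝕂) • w) := key
    rw [key2, norm_smul, norm_inv, RCLike.norm_ofReal, abs_of_pos hvpos]
    calc (1:ℝ)/2 = (2 * infDist z (F:Set E))⁻¹ * (infDist z (F:Set E)) := by
          field_simp
      _ ≤ ‖v‖⁻¹ * ‖v - (‖v‖:𝕂) • w‖ := by
          apply mul_le_mul ?_ hbd hρ.le (by positivity)
          rw [hvnorm]
          gcongr
          exact hvnorm ▸ hvpos


-- compact extraction helper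
lemma aux_seq_extract {𝕂 E : Type*} [RCLike 𝕂] [NormedAddCommGroup E] [NormedSpace 𝕂 E]
    {K : E →L[𝕂] E} (hK : IsCompactOperator ⇑K) {u : ℕ → E} (hu : ∀ n, ‖u n‖ ≤ 1) :
    ∃ y : E, ∃ φ : ℕ → ℕ, StrictMono φ ∧ Tendsto (fun n => K (u (φ n))) atTop (nhds y) := by
  have hb : Bornology.IsBounded (closedBall (0:E) 1) := isBounded_closedBall
  have hcpt : IsCompact (closure (⇑K '' closedBall (0:E) 1)) := by
    have := (hK : IsCompactOperator ⇑(K : E →ₗ[𝕂] E)).isCompact_closure_image_of_bounded hb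
    simpa using this
  have hmem : ∀ n, K (u n) ∈ closure (⇑K '' closedBall (0:E) 1) := fun n =>
    subset_closure ⟨u n, by simpa [mem_closedBall, dist_eq_norm] using hu n, rfl⟩
  obtain ⟨y, -, φ, hφ, hlim⟩ := hcpt.isSeqCompact hmem
  exact ⟨y, φ, hφ, hlim⟩

-- bounded below
lemma aux_bddBelow {𝕂 E : Type*} [RCLike 𝕂] [NormedAddCommGroup E] [NormedSpace 𝕂 E]
    {K : E →L[𝕂] E} (hK : IsCompactOperator ⇑K)
    (hinj : ∀ x : E, x + K x = 0 → x = 0) :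
    ∃ c : ℝ, 0 < c ∧ ∀ x : E, c * ‖x‖ ≤ ‖x + K x‖ := by
  by_contra hcon
  push_neg at hcon
  have hex : ∀ n : ℕ, ∃ u : E, ‖u‖ = 1 ∧ ‖u + K u‖ < 1 / (n + 1) := by
    intro n
    obtain ⟨x, hx⟩ := hcon (1 / (n + 1)) (by positivity)
    have hx0 : x ≠ 0 := by
      rintro rfl; simp at hx
    refine ⟨((‖x‖ : 𝕂))⁻¹ • x, ?_, ?_⟩
    · rw [norm_smul, norm_inv, RCLike.norm_ofReal, abs_of_pos (norm_pos_iff.2 hx0),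
        inv_mul_cancel₀ (norm_ne_zero_iff.2 hx0)]
    · have : ((‖x‖:𝕂))⁻¹ • x + K (((‖x‖:𝕂))⁻¹ • x) = ((‖x‖:𝕂))⁻¹ • (x + K x) := by
        rw [map_smul, smul_add]
      rw [this, norm_smul, norm_inv, RCLike.norm_ofReal, abs_of_pos (norm_pos_iff.2 hx0)]
      rw [inv_mul_lt_iff₀ (norm_pos_iff.2 hx0)]
      calc ‖x + K x‖ < 1 / (n+1) * ‖x‖ := hx
        _ = ‖x‖ * (1 / (↑n + 1)) := by ring
  choose u hu1 hu2 using hex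
  obtain ⟨y, φ, hφ, hlim⟩ := aux_seq_extract hK (fun n => (hu1 n).le)
  have hT0 : Tendsto (fun n => u (φ n) + K (u (φ n))) atTop (nhds 0) := by
    rw [tendsto_iff_norm_sub_tendsto_zero]
    apply squeeze_zero (g := fun n => 1 / ((φ n : ℝ) + 1)) (fun n => norm_nonneg _)
      (fun n => by simpa using (hu2 (φ n)).le)
    exact tendsto_one_div_add_atTop_nhds_zero_nat.comp hφ.tendsto_atTop
  have hulim : Tendsto (fun n => u (φ n)) atTop (nhds (-y)) := by
    have h4 := hT0.sub hlim
    simpa using h4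
  have hy1 : ‖(-y : E)‖ = 1 := by
    have h5 : Tendsto (fun n => ‖u (φ n)‖) atTop (nhds ‖(-y : E)‖) := hulim.norm
    have h6 : Tendsto (fun n : ℕ => ‖u (φ n)‖) atTop (nhds 1) := by
      simp only [hu1]; exact tendsto_const_nhds
    exact tendsto_nhds_unique h5 h6
  have hKy : K (-y) = y := by
    have h7 : Tendsto (fun n => K (u (φ n))) atTop (nhds (K (-y))) :=
      (K.continuous.tendsto _).comp hulim
    exact tendsto_nhds_unique h7 hlim
  have : (-y : E) = 0 := hinj _ (by rw [hKy]; abel)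
  rw [this] at hy1
  simp at hy1

section
variable {𝕂 E : Type*} [RCLike 𝕂] [NormedAddCommGroup E] [NormedSpace 𝕂 E]

lemma aux_fredholm_surj [CompleteSpace E]
    {K : E →L[𝕂] E} (hK : IsCompactOperator ⇑K)
    (hinj : ∀ x : E, x + K x = 0 → x = 0) :
    ∀ y : E, ∃ x : E, x + K x = y := by
  set T : E →L[𝕂] E := ContinuousLinearMap.id 𝕂 E + K with hT
  have hTapp : ∀ x : E, T x = x + K x := fun x => rfl
  obtain ⟨c, hc, hbdd⟩ := aux_bddBelow hK hinj
  have hTanti : AntilipschitzWith (c⁻¹).toNNReal ⇑T := by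
    apply ContinuousLinearMap.antilipschitz_of_bound
    intro x
    rw [Real.coe_toNNReal _ (by positivity), hTapp, inv_mul_eq_div, le_div_iff₀ hc]
    linarith [hbdd x]
  have hanti : ∀ n : ℕ, AntilipschitzWith ((c⁻¹).toNNReal ^ n) ⇑(T ^ n) := by
    intro n
    induction n with
    | zero =>
        simp only [pow_zero]
        have h0 : ⇑(1 : E →L[𝕂] E) = id := rfl
        rw [h0]
        exact AntilipschitzWith.id
    | succ n ih =>
        have hco : ⇑(T ^ (n+1)) = ⇑(T ^ n) ∘ ⇑T := by
          ext x; simp [pow_succ, ContinuousLinearMap.mul_apply]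
        rw [hco, pow_succ, mul_comm]
        exact AntilipschitzWith.comp ih hTanti
  set S : ℕ → Submodule 𝕂 E := fun n => LinearMap.range ((T ^ n : E →L[𝕂] E) : E →ₗ[𝕂] E) with hS
  have hSclosed : ∀ n, IsClosed ((S n : Set E)) := by
    intro n
    have heq : (S n : Set E) = Set.range ⇑(T ^ n) := LinearMap.coe_range _
    rw [heq]
    exact (hanti n).isClosed_range (T ^ n).uniformContinuous
  by_contra hcon
  push_neg at hcon
  obtain ⟨y₀, hy₀⟩ := hcon
  have hTn_succ : ∀ (n : ℕ) (x : E), (T ^ (n+1)) x = (T ^ n) (T x) := fun n x => by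
    rw [pow_succ]; rfl
  have hTn_succ' : ∀ (n : ℕ) (x : E), (T ^ (n+1)) x = T ((T ^ n) x) := fun n x => by
    rw [pow_succ']; rfl
  have hy0S : y₀ ∉ S 1 := by
    rintro ⟨w, hw⟩
    refine hy₀ w ?_
    rw [← hTapp w, ← hw, pow_one]; rfl
  have hmem : ∀ n, (T ^ n) y₀ ∈ S n := fun n => ⟨y₀, rfl⟩
  have hnot : ∀ n, (T ^ n) y₀ ∉ S (n+1) := by
    rintro n ⟨w, hw⟩
    apply hy0S
    refine ⟨w, ?_⟩
    have h1 : (T ^ n) (T w) = (T ^ n) y₀ := by rw [← hTn_succ]; exact hw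
    have h2 := (hanti n).injective h1
    rw [pow_one]; exact h2
  have hmono : Antitone S := by
    apply antitone_nat_of_succ_le
    rintro n _ ⟨w, rfl⟩
    exact ⟨T w, (hTn_succ n w).symm⟩
  have hsel : ∀ n, ∃ x ∈ S n, ‖x‖ = 1 ∧ ∀ y ∈ S (n+1), (1:ℝ)/2 ≤ ‖x - y‖ :=
    fun n => aux_riesz_sel (hmono (Nat.le_succ n)) (hSclosed (n+1)) (hmem n) (hnot n)
  choose x hxS hx1 hxsep using hsel
  have hTstep : ∀ n, T (x n) ∈ S (n+1) := by
    intro n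
    obtain ⟨w, hw⟩ := hxS n
    exact ⟨w, by show (T ^ (n+1)) w = _; rw [hTn_succ']; exact congrArg T hw⟩
  have hsep : ∀ m n, m < n → (1:ℝ)/2 ≤ ‖K (x m) - K (x n)‖ := by
    intro m n hmn
    have hKd : K (x m) - K (x n) = (T (x m) - T (x n) + x n) - x m := by
      simp only [hTapp]; abel
    have hre : ‖K (x m) - K (x n)‖ = ‖x m - (T (x m) - T (x n) + x n)‖ := by
      rw [hKd, norm_sub_rev]
    rw [hre]
    apply hxsep m
    have h1 : T (x m) ∈ S (m+1) := hTstep m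
    have h2 : T (x n) ∈ S (m+1) := hmono (Nat.succ_le_succ hmn.le) (hTstep n)
    have h3 : x n ∈ S (m+1) := hmono hmn (hxS n)
    exact Submodule.add_mem _ (Submodule.sub_mem _ h1 h2) h3
  obtain ⟨y, φ, hφ, hlim⟩ := aux_seq_extract hK (fun n => (hx1 n).le)
  obtain ⟨N, hN⟩ := Metric.cauchySeq_iff.1 hlim.cauchySeq ((1:ℝ)/2) (by norm_num)
  have hd := hN N le_rfl (N+1) (Nat.le_succ N)
  rw [dist_eq_norm] at hd
  exact absurd hd (hsep (φ N) (φ (N+1)) (hφ (lt_add_one N))).not_gt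
end


section
variable {𝕂 W : Type*} [RCLike 𝕂] [NormedAddCommGroup W] [NormedSpace 𝕂 W]

/-- conjugate of an antilinear functional, as a linear functional -/
noncomputable def auxConj' (ψ : W →SL[starRingEnd 𝕂] 𝕂) : W →L[𝕂] 𝕂 :=
  { toFun := fun w => starRingEnd 𝕂 (ψ w)
    map_add' := by intro x y; simp
    map_smul' := by intro c x; simp
    cont := continuous_star.comp ψ.continuous }

/-- conjugate of a linear functional, as an antilinear functional -/
noncomputable def auxConj (f : W →L[𝕂] 𝕂) : W →SL[starRingEnd 𝕂] 𝕂 :=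
  { toFun := fun w => starRingEnd 𝕂 (f w)
    map_add' := by intro x y; simp
    map_smul' := by intro c x; simp
    cont := continuous_star.comp f.continuous }

@[simp] lemma auxConj'_apply (ψ : W →SL[starRingEnd 𝕂] 𝕂) (w : W) :
    auxConj' ψ w = starRingEnd 𝕂 (ψ w) := rfl
@[simp] lemma auxConj_apply (f : W →L[𝕂] 𝕂) (w : W) :
    auxConj f w = starRingEnd 𝕂 (f w) := rfl

lemma auxConj_auxConj' (ψ : W →SL[starRingEnd 𝕂] 𝕂) : auxConj (auxConj' ψ) = ψ := by
  ext w; simp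

lemma auxConj_norm_le (f : W →L[𝕂] 𝕂) : ‖auxConj f‖ ≤ ‖f‖ := by
  apply ContinuousLinearMap.opNorm_le_bound _ (norm_nonneg f)
  intro w
  simp only [auxConj_apply, RCLike.norm_conj]
  exact f.le_opNorm w
end

section
variable {𝕂 W : Type*} [RCLike 𝕂] [NormedAddCommGroup W] [NormedSpace 𝕂 W]

lemma aux_phi_repr (hrefl : Function.Surjective ⇑(NormedSpace.inclusionInDoubleDual 𝕂 W))
    (Φ : (W →SL[starRingEnd 𝕂] 𝕂) →L[𝕂] 𝕂) : ∃ w₀ : W, ∀ ψ : W →SL[starRingEnd 𝕂] 𝕂, Φ ψ = ψ w₀ := by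
  let Ψlin : (W →L[𝕂] 𝕂) →ₗ[𝕂] 𝕂 :=
    { toFun := fun f => starRingEnd 𝕂 (Φ (auxConj f))
      map_add' := by
        intro f g
        have : auxConj (f + g) = auxConj f + auxConj g := by ext w; simp
        simp [this]
      map_smul' := by
        intro c f
        have : auxConj (c • f) = starRingEnd 𝕂 c • auxConj f := by ext w; simp
        simp [this, ContinuousLinearMap.map_smulₛₗ] }
  have hbound : ∀ f : W →L[𝕂] 𝕂, ‖Ψlin f‖ ≤ ‖Φ‖ * ‖f‖ := by
    intro f
    have h1 : ‖Ψlin f‖ = ‖Φ (auxConj f)‖ := RCLike.norm_conj _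
    rw [h1]
    calc ‖Φ (auxConj f)‖ ≤ ‖Φ‖ * ‖auxConj f‖ := Φ.le_opNorm _
      _ ≤ ‖Φ‖ * ‖f‖ := by gcongr; exact auxConj_norm_le f
  let Ψ : (W →L[𝕂] 𝕂) →L[𝕂] 𝕂 := LinearMap.mkContinuous Ψlin ‖Φ‖ hbound
  obtain ⟨w₀, hw₀⟩ := hrefl Ψ
  refine ⟨w₀, fun ψ => ?_⟩
  have h2 : Ψ (auxConj' ψ) = (auxConj' ψ) w₀ := by
    rw [← hw₀]; rfl
  have h3 : Ψ (auxConj' ψ) = starRingEnd 𝕂 (Φ ψ) := by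
    show starRingEnd 𝕂 (Φ (auxConj (auxConj' ψ))) = _
    rw [auxConj_auxConj' ψ]
  rw [h3, auxConj'_apply] at h2
  exact star_injective h2
end

section
variable {𝕂 V W : Type*} [RCLike 𝕂] [NormedAddCommGroup V] [NormedSpace 𝕂 V] [CompleteSpace V]
  [NormedAddCommGroup W] [NormedSpace 𝕂 W]

lemma aux_a_bijective
    (hrefl : Function.Surjective ⇑(NormedSpace.inclusionInDoubleDual 𝕂 W))
    (a₁ : V →L[𝕂] (W →SL[starRingEnd 𝕂] 𝕂))
    {c : ℝ} (hc : 0 < c)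
    (hinfsup : ∀ v : V, c * ‖v‖ ≤ ‖a₁ v‖)
    (hnondeg : ∀ w : W, (∀ v : V, a₁ v w = 0) → w = 0) :
    Function.Bijective ⇑a₁ := by
  have hanti : AntilipschitzWith (c⁻¹).toNNReal ⇑a₁ := by
    apply ContinuousLinearMap.antilipschitz_of_bound
    intro x
    rw [Real.coe_toNNReal _ (by positivity), inv_mul_eq_div, le_div_iff₀ hc]
    linarith [hinfsup x]
  refine ⟨hanti.injective, ?_⟩
  set R : Submodule 𝕂 (W →SL[starRingEnd 𝕂] 𝕂) := LinearMap.range (a₁ : V →ₗ[𝕂] (W →SL[starRingEnd 𝕂] 𝕂)) with hR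
  have hRclosed : IsClosed (R : Set (W →SL[starRingEnd 𝕂] 𝕂)) := by
    have heq : (R : Set (W →SL[starRingEnd 𝕂] 𝕂)) = Set.range ⇑a₁ := LinearMap.coe_range _
    rw [heq]
    exact hanti.isClosed_range a₁.uniformContinuous
  -- show R = ⊤
  by_contra hcon
  obtain ⟨ψ₀, hψ₀⟩ : ∃ ψ₀, ψ₀ ∉ R := by
    obtain ⟨ψ₀, hψ₀⟩ := not_forall.1 hcon
    exact ⟨ψ₀, fun hmem => hψ₀ hmem⟩
  haveI : IsClosed (R : Set (W →SL[starRingEnd 𝕂] 𝕂)) := hRclosed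
  let πL : (W →SL[starRingEnd 𝕂] 𝕂) →L[𝕂] ((W →SL[starRingEnd 𝕂] 𝕂) ⧸ R) :=
    ⟨R.mkQ, by exact continuous_quot_mk⟩
  have hπ₀ : πL ψ₀ ≠ 0 := by
    intro h0
    exact hψ₀ ((Submodule.Quotient.mk_eq_zero R).1 h0)
  obtain ⟨g, -, hg⟩ := exists_dual_vector 𝕂 (πL ψ₀) ((norm_ne_zero_iff (E := (W →SL[starRingEnd 𝕂] 𝕂) ⧸ R)).2 hπ₀)
  set Φ : (W →SL[starRingEnd 𝕂] 𝕂) →L[𝕂] 𝕂 := g.comp πL with hΦ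
  obtain ⟨w₀, hw₀⟩ := aux_phi_repr hrefl Φ
  have hvanish : ∀ v : V, a₁ v w₀ = 0 := by
    intro v
    have hmem : a₁ v ∈ R := ⟨v, rfl⟩
    have : πL (a₁ v) = 0 := (Submodule.Quotient.mk_eq_zero R).2 hmem
    have h2 : Φ (a₁ v) = 0 := by simp [hΦ, ContinuousLinearMap.comp_apply, this]
    rw [← hw₀ (a₁ v)]
    exact h2
  have hw0 : w₀ = 0 := hnondeg w₀ hvanish
  have h3 : Φ ψ₀ = 0 := by rw [hw₀ ψ₀, hw0, map_zero]
  rw [hΦ] at h3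
  simp only [ContinuousLinearMap.comp_apply] at h3
  rw [hg] at h3
  have h4 : ‖πL ψ₀‖ = 0 := by simpa using h3
  exact hπ₀ ((norm_eq_zero (E := (W →SL[starRingEnd 𝕂] 𝕂) ⧸ R)).1 h4)
end


/-- Proposition 3.5 c) (Fredholm alternative): if the embedding `j : V → H` is compact
and the homogeneous problem `a₁(u,w) + d(ju,w) = 0` for all `w` only has the trivial
solution, then for every `φ ∈ W*` the variational problem
`a₁(u,w) + d(ju,w) = φ(w)` for all `w ∈ W` has exactly one solution `u ∈ V`. -/
theorem strongly_well_posed_of_compact_and_injective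
    {𝕂 V W H : Type*} [RCLike 𝕂]
    [NormedAddCommGroup V] [NormedSpace 𝕂 V] [CompleteSpace V]
    [NormedAddCommGroup W] [NormedSpace 𝕂 W] [CompleteSpace W] [Nontrivial W]
    [NormedAddCommGroup H] [NormedSpace 𝕂 H] [CompleteSpace H]
    (hrefl : Function.Surjective ⇑(NormedSpace.inclusionInDoubleDual 𝕂 W))
    (j : V →L[𝕂] H) (hj : Function.Injective ⇑j)
    (hjcompact : IsCompactOperator ⇑j)
    (a₁ : V →L[𝕂] (W →SL[starRingEnd 𝕂] 𝕂))
    (c : ℝ) (hc : 0 < c)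
    (hinfsup : ∀ v : V, c * ‖v‖ ≤ ‖a₁ v‖)
    (hnondeg : ∀ w : W, (∀ v : V, a₁ v w = 0) → w = 0)
    (d : H →L[𝕂] (W →SL[starRingEnd 𝕂] 𝕂))
    (hinj : ∀ u : V, (∀ w : W, a₁ u w + d (j u) w = 0) → u = 0) :
    ∀ φ : W →SL[starRingEnd 𝕂] 𝕂, ∃! u : V, ∀ w : W, a₁ u w + d (j u) w = φ w := by
  have hbij := aux_a_bijective hrefl a₁ hc hinfsup hnondeg
  have hker : LinearMap.ker (a₁ : V →ₗ[𝕂] (W →SL[starRingEnd 𝕂] 𝕂)) = ⊥ := LinearMap.ker_eq_bot.2 hbij.1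
  have hrange : LinearMap.range (a₁ : V →ₗ[𝕂] (W →SL[starRingEnd 𝕂] 𝕂)) = ⊤ := LinearMap.range_eq_top.2 hbij.2
  let Aeq := ContinuousLinearEquiv.ofBijective a₁ hker hrange
  have hAeq : ∀ v : V, Aeq v = a₁ v := fun v => rfl
  let K : V →L[𝕂] V := ((Aeq.symm : (W →SL[starRingEnd 𝕂] 𝕂) →L[𝕂] V).comp d).comp j
  have hKapp : ∀ v : V, K v = Aeq.symm (d (j v)) := fun v => rfl
  have hKcompact : IsCompactOperator ⇑K := by
    have h1 : ⇑K = ⇑((Aeq.symm : (W →SL[starRingEnd 𝕂] 𝕂) →L[𝕂] V).comp d) ∘ ⇑j := rfl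
    rw [h1]
    exact hjcompact.clm_comp _
  have hiff : ∀ (u : V) (φ : W →SL[starRingEnd 𝕂] 𝕂),
      (∀ w : W, a₁ u w + d (j u) w = φ w) ↔ u + K u = Aeq.symm φ := by
    intro u φ
    constructor
    · intro h
      have h2 : a₁ u + d (j u) = φ := by
        ext w
        simpa using h w
      have h3 : Aeq.symm (a₁ u) = u := by rw [← hAeq u]; exact Aeq.symm_apply_apply u
      calc u + K u = Aeq.symm (a₁ u) + Aeq.symm (d (j u)) := by rw [h3, hKapp]
        _ = Aeq.symm (a₁ u + d (j u)) := (map_add _ _ _).symm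
        _ = Aeq.symm φ := by rw [h2]
    · intro h w
      have h2 := congrArg (fun x => Aeq x) h
      simp only [map_add] at h2
      rw [hKapp, Aeq.apply_symm_apply, Aeq.apply_symm_apply, hAeq] at h2
      have h3 := congrArg (fun ψ : W →SL[starRingEnd 𝕂] 𝕂 => ψ w) h2
      simpa using h3
  have hKinj : ∀ x : V, x + K x = 0 → x = 0 := by
    intro x hx
    apply hinj x
    intro w
    have h4 := (hiff x 0).2 (by rw [map_zero]; exact hx)
    simpa using h4 w
  intro φ
  obtain ⟨u, hu⟩ := aux_fredholm_surj hKcompact hKinj (Aeq.symm φ)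
  refine ⟨u, (hiff u φ).2 hu, ?_⟩
  intro v hv
  have h1 : v + K v = u + K u := ((hiff v φ).1 hv).trans hu.symm
  have h2 : (v - u) + K (v - u) = 0 := by
    rw [map_sub]
    rw [show v - u + (K v - K u) = (v + K v) - (u + K u) from by abel, h1, sub_self]
  have h3 := hKinj _ h2
  exact sub_eq_zero.1 h3
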